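/- arXiv:1809.05026 — 2 statements merged into one kernel-verified Lean document; each statement's English description precedes it below -/
import Mathlib

section
/- Let θ ∈ Der(S) be a polynomial derivation and ζ ∈ D(𝒜, −∞) a logarithmic vector field. Then ∇_θ(ζ) ∈ D(𝒜, −∞). -/
open MvPolynomial

set_option synthInstance.maxHeartbeats 1000000
set_option maxHeartbeats 1000000

noncomputable section

/-- The polynomial ring `S = ℂ[x_1, …, x_ℓ]`. -/
abbrev Spoly (ℓ : ℕ) := MvPolynomial (Fin ℓ) ℂ

/-- The field `F = ℂ(x_1, …, x_ℓ)` of rational functions. -/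
abbrev Frac (ℓ : ℕ) := FractionRing (Spoly ℓ)

/-- The canonical embedding `S → F`. -/
def toF {ℓ : ℕ} : Spoly ℓ →+* Frac ℓ := algebraMap _ _

/-- The linear form with coefficient vector `a`. -/
def lin {ℓ : ℕ} (a : Fin ℓ → ℂ) : Spoly ℓ := ∑ i, C (a i) * X i

/-- Orthogonality of coefficient vectors with respect to the (standard) Hermitian form. -/
def orth {ℓ : ℕ} (a b : Fin ℓ → ℂ) : Prop := ∑ i, (starRingEnd ℂ) (a i) * b i = 0

/-- The localization `S_{⟨α⟩}` of `S` at the prime ideal `⟨α⟩`, as a subset of `F`. -/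
def locAt {ℓ : ℕ} (α : Spoly ℓ) : Set (Frac ℓ) :=
  {x | ∃ f g : Spoly ℓ, g ∉ Ideal.span ({α} : Set (Spoly ℓ)) ∧ toF g * x = toF f}

/-- The ring `S' = S[Q_𝒜^{-1}]`, as a subset of `F`. -/
def Sloc {ℓ : ℕ} (A : Finset (Fin ℓ → ℂ)) : Set (Frac ℓ) :=
  {x | ∃ (f : Spoly ℓ) (n : ℕ), toF (∏ a ∈ A, lin a) ^ n * x = toF f}

/-- The module `D(𝒜, -∞)` of logarithmic vector fields on the arrangement with
defining linear forms `lin a` for `a ∈ A`: derivations of `S' = S[Q_𝒜^{-1}]` with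
`θ(β) ∈ S_{⟨α_H⟩}` for all `β` orthogonal to `α_H`. -/
def Dinf {ℓ : ℕ} (A : Finset (Fin ℓ → ℂ)) (θ : Derivation ℂ (Frac ℓ) (Frac ℓ)) : Prop :=
  (∀ i, θ (toF (X i)) ∈ Sloc A) ∧
  ∀ a ∈ A, ∀ b : Fin ℓ → ℂ, orth a b → θ (toF (lin b)) ∈ locAt (lin a)

/-- The module `D(𝒜, ν)` of `(𝒜,ν)`-derivations for a ℤ-valued multiplicity `ν`:
logarithmic vector fields with `θ(α_H) ∈ α_H^{ν(H)}·S_{⟨α_H⟩}` for every `H ∈ 𝒜`. -/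
def Dmult {ℓ : ℕ} (A : Finset (Fin ℓ → ℂ)) (ν : (Fin ℓ → ℂ) → ℤ)
    (θ : Derivation ℂ (Frac ℓ) (Frac ℓ)) : Prop :=
  Dinf A θ ∧ ∀ a ∈ A, ∃ y ∈ locAt (lin a), θ (toF (lin a)) = toF (lin a) ^ ν a * y

/-- `A` is a central arrangement: all linear forms nonzero and pairwise
non-proportional (distinct hyperplanes). -/
def IsArrangement {ℓ : ℕ} (A : Finset (Fin ℓ → ℂ)) : Prop :=
  (∀ a ∈ A, a ≠ 0) ∧ ∀ a ∈ A, ∀ b ∈ A, (∃ c : ℂ, b = c • a) → a = b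

/-- `θ` is a polynomial derivation, i.e. `θ ∈ Der(S)`. -/
def PolyDer {ℓ : ℕ} (θ : Derivation ℂ (Frac ℓ) (Frac ℓ)) : Prop :=
  ∀ i, ∃ f : Spoly ℓ, θ (toF (X i)) = toF f

/-- `θ_1, …, θ_ℓ` is an `S`-basis of `D(𝒜, ν)`. -/
def IsBasisOfD {ℓ : ℕ} (A : Finset (Fin ℓ → ℂ)) (ν : (Fin ℓ → ℂ) → ℤ)
    (θs : Fin ℓ → Derivation ℂ (Frac ℓ) (Frac ℓ)) : Prop :=
  (∀ i, Dmult A ν (θs i)) ∧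
  ∀ θ, Dmult A ν θ → ∃! c : Fin ℓ → Spoly ℓ, θ = ∑ i, toF (c i) • θs i

/-- `θ` is homogeneous of polynomial degree `d`: `θ = Σ (f_i/g_i) ∂_{x_i}` with
all `f_i` homogeneous of degree `p`, all `g_i ≠ 0` homogeneous of degree `q`, and `d = p - q`. -/
def IsHomogDer {ℓ : ℕ} (θ : Derivation ℂ (Frac ℓ) (Frac ℓ)) (d : ℤ) : Prop :=
  ∃ (p q : ℕ) (f g : Fin ℓ → Spoly ℓ), d = (p : ℤ) - (q : ℤ) ∧
    ∀ i, f i ∈ homogeneousSubmodule (Fin ℓ) ℂ p ∧ g i ∈ homogeneousSubmodule (Fin ℓ) ℂ q ∧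
      g i ≠ 0 ∧ toF (g i) * θ (toF (X i)) = toF (f i)

/-- The defining rational function `Q(𝒜, ν) = ∏_H α_H^{ν(H)}`. -/
def Qrat {ℓ : ℕ} (A : Finset (Fin ℓ → ℂ)) (ν : (Fin ℓ → ℂ) → ℤ) : Frac ℓ :=
  ∏ a ∈ A, toF (lin a) ^ ν a

/-- `ζ` is `ν`-universal for the connection `∇`: `Φ_ζ : θ ↦ ∇_θ(ζ)` is an
`S`-module isomorphism `Der(S) → D(𝒜, ν)`. -/
def IsUniversal {ℓ : ℕ} (A : Finset (Fin ℓ → ℂ)) (ν : (Fin ℓ → ℂ) → ℤ)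
    (nabla : Derivation ℂ (Frac ℓ) (Frac ℓ) → Derivation ℂ (Frac ℓ) (Frac ℓ) →
      Derivation ℂ (Frac ℓ) (Frac ℓ))
    (ζ : Derivation ℂ (Frac ℓ) (Frac ℓ)) : Prop :=
  (∀ θ, PolyDer θ → Dmult A ν (nabla θ ζ)) ∧
  ∀ φ, Dmult A ν φ → ∃! θ, PolyDer θ ∧ nabla θ ζ = φ


section Aux

variable {ℓ : ℕ}

lemma toF_C (c : ℂ) : toF (C c : Spoly ℓ) = algebraMap ℂ (Frac ℓ) c := by
  rw [toF, ← MvPolynomial.algebraMap_eq, ← IsScalarTower.algebraMap_apply]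

lemma chain_rule (δ : Derivation ℂ (Frac ℓ) (Frac ℓ)) (p : Spoly ℓ) :
    δ (toF p) = ∑ i, toF (pderiv i p) * δ (toF (X i)) := by
  induction p using MvPolynomial.induction_on with
  | C c => simp [toF_C, Derivation.map_algebraMap, pderiv_C]
  | add p q hp hq => simp [map_add, hp, hq, add_mul, Finset.sum_add_distrib]
  | mul_X p j hp =>
    rw [map_mul, Derivation.leibniz, smul_eq_mul, smul_eq_mul]
    have h2 : ∑ i, toF (pderiv i (p * X j)) * δ (toF (X i))
        = (∑ i, toF (X j) * (toF (pderiv i p) * δ (toF (X i))))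
          + ∑ i, toF p * toF (pderiv i (X j)) * δ (toF (X i)) := by
      rw [← Finset.sum_add_distrib]
      refine Finset.sum_congr rfl fun i _ => ?_
      rw [pderiv_mul, map_add, map_mul, map_mul, add_mul]; ring
    have h3 : ∑ i, toF p * toF (pderiv i (X j)) * δ (toF (X i)) = toF p * δ (toF (X j)) := by
      rw [Finset.sum_eq_single j]
      · simp [pderiv_X_self]
      · intro i _ hij
        simp [pderiv_X_of_ne (Ne.symm hij)]
      · intro h; exact absurd (Finset.mem_univ j) h
    rw [h2, ← Finset.mul_sum, ← hp, h3]; ring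

lemma polyDer_toF {θ : Derivation ℂ (Frac ℓ) (Frac ℓ)} (hθ : PolyDer θ) (p : Spoly ℓ) :
    ∃ q : Spoly ℓ, θ (toF p) = toF q := by
  choose f hf using hθ
  refine ⟨∑ i, pderiv i p * f i, ?_⟩
  rw [chain_rule, map_sum]
  exact Finset.sum_congr rfl fun i _ => by rw [hf, map_mul]

lemma prime_X_fin {n : ℕ} (i : Fin (n + 1)) : Prime (X i : Spoly (n + 1)) := by
  have h0 : Prime (X (0 : Fin (n + 1)) : Spoly (n + 1)) := by
    rw [← MulEquiv.prime_iff (finSuccEquiv ℂ n).toMulEquiv]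
    have : (finSuccEquiv ℂ n).toMulEquiv (X 0) = Polynomial.X := finSuccEquiv_X_zero
    rw [this]
    exact Polynomial.prime_X
  rw [← MulEquiv.prime_iff (renameEquiv ℂ (Equiv.swap i 0)).toMulEquiv]
  have : (renameEquiv ℂ (Equiv.swap i 0)).toMulEquiv (X i) = (X (0 : Fin (n + 1)) : Spoly (n + 1)) := by
    show renameEquiv ℂ (Equiv.swap i 0) (X i) = _
    rw [renameEquiv_apply, rename_X, Equiv.swap_apply_left]
  rw [this]
  exact h0

lemma lin_eq_add_erase (a : Fin ℓ → ℂ) (i0 : Fin ℓ) :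
    lin a = C (a i0) * X i0 + ∑ j ∈ Finset.univ.erase i0, C (a j) * X j := by
  rw [lin, ← Finset.add_sum_erase _ _ (Finset.mem_univ i0)]

lemma prime_lin {a : Fin ℓ → ℂ} (ha : a ≠ 0) : Prime (lin a) := by
  obtain ⟨i0, hi0⟩ : ∃ i, a i ≠ 0 := by
    by_contra h; push_neg at h; exact ha (funext h)
  obtain ⟨n, rfl⟩ : ∃ n, ℓ = n + 1 := by
    cases ℓ with
    | zero => exact i0.elim0
    | succ n => exact ⟨n, rfl⟩
  classical
  set L' : Spoly (n + 1) := ∑ j ∈ Finset.univ.erase i0, C (a j) * X j with hL'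
  set ψfun : Fin (n + 1) → Spoly (n + 1) := fun j => if j = i0 then lin a else X j with hψfun
  set φfun : Fin (n + 1) → Spoly (n + 1) :=
    fun j => if j = i0 then C (a i0)⁻¹ * (X i0 - L') else X j with hφfun
  have hCinv : (C (a i0) : Spoly (n + 1)) * C (a i0)⁻¹ = 1 := by
    rw [← C_mul, mul_inv_cancel₀ hi0, C_1]
  have hψL' : aeval ψfun L' = L' := by
    rw [hL', map_sum]
    refine Finset.sum_congr rfl fun j hj => ?_
    have hj' : j ≠ i0 := Finset.ne_of_mem_erase hj
    simp [hψfun, hj']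
  have hφL' : aeval φfun L' = L' := by
    rw [hL', map_sum]
    refine Finset.sum_congr rfl fun j hj => ?_
    have hj' : j ≠ i0 := Finset.ne_of_mem_erase hj
    simp [hφfun, hj']
  have hlin : lin a = C (a i0) * X i0 + L' := lin_eq_add_erase a i0
  have hφψ : (aeval φfun).comp (aeval ψfun) = AlgHom.id ℂ (Spoly (n + 1)) := by
    apply MvPolynomial.algHom_ext
    intro j
    by_cases hj : j = i0
    · subst hj
      simp only [AlgHom.comp_apply, aeval_X, AlgHom.id_apply]
      simp only [hψfun]
      rw [if_true]
      rw [hlin, map_add, map_mul, hφL', aeval_C, aeval_X]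
      simp only [hφfun]
      rw [if_true, algebraMap_eq]
      rw [← mul_assoc, hCinv, one_mul]
      ring
    · simp [hψfun, hφfun, hj]
  have hψφ : (aeval ψfun).comp (aeval φfun) = AlgHom.id ℂ (Spoly (n + 1)) := by
    apply MvPolynomial.algHom_ext
    intro j
    by_cases hj : j = i0
    · subst hj
      simp only [AlgHom.comp_apply, aeval_X, AlgHom.id_apply]
      simp only [hφfun]
      rw [if_true]
      rw [map_mul, map_sub, aeval_C, aeval_X, hψL']
      simp only [hψfun]
      rw [if_true, algebraMap_eq]
      rw [hlin]
      rw [add_sub_cancel_right, ← mul_assoc, mul_comm (C (a j)⁻¹), hCinv, one_mul]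
    · simp [hψfun, hφfun, hj]
  let e : Spoly (n + 1) ≃ₐ[ℂ] Spoly (n + 1) := AlgEquiv.ofAlgHom (aeval ψfun) (aeval φfun) hψφ hφψ
  have he : e.toMulEquiv (X i0) = lin a := by
    show aeval ψfun (X i0) = lin a
    rw [aeval_X]
    simp only [hψfun]
    rw [if_true]
  have := (MulEquiv.prime_iff (p := (X i0 : Spoly (n + 1))) e.toMulEquiv).mpr (prime_X_fin i0)
  rwa [he] at this

lemma derivation_lin (δ : Derivation ℂ (Frac ℓ) (Frac ℓ)) (b : Fin ℓ → ℂ) :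
    δ (toF (lin b)) = ∑ j, b j • δ (toF (X j)) := by
  have h : toF (lin b) = ∑ j, b j • toF (X j) := by
    rw [lin, map_sum]
    exact Finset.sum_congr rfl fun j _ => by rw [map_mul, toF_C]; exact (Algebra.smul_def (b j) (toF (X j))).symm
  rw [h, map_sum]
  exact Finset.sum_congr rfl fun j _ => by rw [Derivation.map_smul]

end Aux

/-- If `θ ∈ Der(S)` and `ζ ∈ D(𝒜, −∞)`, then `∇_θ(ζ) ∈ D(𝒜, −∞)`. -/
theorem nabla_mem_Dinf {ℓ : ℕ} (A : Finset (Fin ℓ → ℂ)) (hA : IsArrangement A)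
    (nabla : Derivation ℂ (Frac ℓ) (Frac ℓ) → Derivation ℂ (Frac ℓ) (Frac ℓ) →
      Derivation ℂ (Frac ℓ) (Frac ℓ))
    (hnabla : ∀ θ φ (i : Fin ℓ), nabla θ φ (toF (X i)) = θ (φ (toF (X i))))
    (θ ζ : Derivation ℂ (Frac ℓ) (Frac ℓ))
    (hθ : PolyDer θ) (hζ : Dinf A ζ) :
    Dinf A (nabla θ ζ) := by
  constructor
  · intro i
    obtain ⟨f, n, hfn⟩ := hζ.1 i
    set Q : Spoly ℓ := ∏ a ∈ A, lin a with hQ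
    have hfn' : toF Q ^ (n + 1) * ζ (toF (X i)) = toF (Q * f) := by
      rw [pow_succ, map_mul, mul_comm (toF Q ^ n), mul_assoc, hfn]
    obtain ⟨Df, hDf⟩ := polyDer_toF hθ (Q * f)
    obtain ⟨DQ, hDQ⟩ := polyDer_toF hθ Q
    have key := congrArg θ hfn'
    rw [Derivation.leibniz, Derivation.leibniz_pow, hDf, hDQ, smul_eq_mul, smul_eq_mul,
      smul_eq_mul, nsmul_eq_mul, Nat.add_sub_cancel] at key
    rw [hnabla]
    refine ⟨Q * Df - ((n : Spoly ℓ) + 1) * (DQ * (Q * f)), n + 2, ?_⟩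
    have hc : toF (Q * Df - ((n : Spoly ℓ) + 1) * (DQ * (Q * f)))
        = toF Q * toF Df - ((n : Frac ℓ) + 1) * (toF DQ * toF (Q * f)) := by
      simp only [map_sub, map_mul, map_add, map_natCast, map_one]
    rw [hc]
    push_cast at key
    linear_combination toF Q * key - ((n : Frac ℓ) + 1) * toF DQ * hfn'
  · intro a ha b hab
    have heq : (nabla θ ζ) (toF (lin b)) = θ (ζ (toF (lin b))) := by
      rw [derivation_lin (nabla θ ζ) b]
      have h2 : θ (ζ (toF (lin b))) = ∑ j, b j • θ (ζ (toF (X j))) := by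
        rw [derivation_lin ζ b, map_sum]
        exact Finset.sum_congr rfl fun j _ => by rw [Derivation.map_smul]
      rw [h2]
      exact Finset.sum_congr rfl fun j _ => by rw [hnabla]
    obtain ⟨f, g, hg, hfg⟩ := hζ.2 a ha b hab
    obtain ⟨Df, hDf⟩ := polyDer_toF hθ f
    obtain ⟨Dg, hDg⟩ := polyDer_toF hθ g
    have key := congrArg θ hfg
    rw [Derivation.leibniz, hDf, hDg, smul_eq_mul, smul_eq_mul] at key
    refine ⟨g * Df - Dg * f, g * g, ?_, ?_⟩
    · intro hmem
      apply hg
      rw [Ideal.mem_span_singleton] at hmem ⊢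
      have hprime := prime_lin (hA.1 a ha)
      rcases (hprime.dvd_mul.mp hmem) with h | h
      · exact h
      · exact h
    · rw [heq]
      have hc : toF ((g : Spoly ℓ) * Df - Dg * f) = toF g * toF Df - toF Dg * toF f := by
        rw [map_sub, map_mul, map_mul]
      rw [map_mul, hc]
      linear_combination toF g * key - toF Dg * hfg
end
end

section
/- Let ℋ_k = B_{k+1}^{-1}M_η · B_{k+2}^{-1}M_η ⋯ B_e^{-1}M_η for d ≤ k ≤ e (with ℋ_e = Id), where B_j = −(B_∞ + j·Id) are nonsingular constant diagonal matrices and M_η = t_ℓ·Id + M'(t_1,...,t_{ℓ−1}). If row vectors a_k with entries in T = ℂ[t_1,...,t_{ℓ−1}] satisfy Σ_{k=d}^e a_k ℋ_k = 0, then a_e = 0; consequently the derivations ξ_i^{(k)} = ∇_D^k(η_i), over all k ∈ ℤ and 1 ≤ i ≤ ℓ, are linearly independent over T. -/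
set_option synthInstance.maxHeartbeats 1000000
set_option maxHeartbeats 1000000

noncomputable section

open Matrix

/-- The nonsingular constant diagonal matrix `B_j = −(B_∞ + j·Id)`. -/
def Bmat {ℓ : ℕ} {K : Type*} [Field K] [Algebra ℂ K] (Binf : Fin ℓ → ℂ) (j : ℤ) :
    Matrix (Fin ℓ) (Fin ℓ) K :=
  -(Matrix.diagonal (fun i => algebraMap ℂ K (Binf i)) + (j : K) • 1)

/-- The matrix `ℋ_k = B_{k+1}^{-1}M_η · B_{k+2}^{-1}M_η ⋯ B_e^{-1}M_η` (with `ℋ_e = Id`). -/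
def Hmat {ℓ : ℕ} {K : Type*} [Field K] [Algebra ℂ K] (Binf : Fin ℓ → ℂ)
    (Mη : Matrix (Fin ℓ) (Fin ℓ) K) (k e : ℤ) : Matrix (Fin ℓ) (Fin ℓ) K :=
  ((List.range (e - k).toNat).map (fun m => (Bmat Binf (k + 1 + m))⁻¹ * Mη)).prod


section
variable {K : Type*} [Field K] [Algebra ℂ K] (D : Derivation ℂ K K)

lemma iter_zero (s : ℕ) : (⇑D)^[s] (0:K) = 0 := by
  induction s with
  | zero => rfl
  | succ s ih => rw [Function.iterate_succ_apply, map_zero]; exact ih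

lemma iter_add (s : ℕ) (x y : K) : (⇑D)^[s] (x+y) = (⇑D)^[s] x + (⇑D)^[s] y := by
  induction s generalizing x y with
  | zero => rfl
  | succ s ih => rw [Function.iterate_succ_apply, map_add]; exact ih _ _

lemma iter_sum {ι : Type*} (s : ℕ) (t : Finset ι) (f : ι → K) :
    (⇑D)^[s] (∑ i ∈ t, f i) = ∑ i ∈ t, (⇑D)^[s] (f i) := by
  classical
  induction t using Finset.induction with
  | empty => simp [iter_zero]
  | insert _ _ h ih => rw [Finset.sum_insert h, Finset.sum_insert h, iter_add]; rw [ih]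

lemma iter_const_mul (s : ℕ) (x y : K) (hx : D x = 0) :
    (⇑D)^[s] (x*y) = x * (⇑D)^[s] y := by
  induction s generalizing y with
  | zero => rfl
  | succ s ih =>
    rw [Function.iterate_succ_apply, Function.iterate_succ_apply]
    rw [show D (x*y) = x * D y by rw [D.leibniz]; simp [smul_eq_mul, hx]]
    exact ih _

lemma iter_mul (x : K) (hx : D (D x) = 0) (s : ℕ) (y : K) :
    (⇑D)^[s+1] (x*y) = x * (⇑D)^[s+1] y + (s+1) • (D x * (⇑D)^[s] y) := by
  induction s generalizing y with
  | zero => simp [D.leibniz, smul_eq_mul]; ring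
  | succ s ih =>
    rw [Function.iterate_succ_apply (⇑D) (s+1)]
    rw [show D (x*y) = x * D y + D x * y by rw [D.leibniz]; simp [smul_eq_mul]; ring]
    rw [iter_add, ih (D y), iter_const_mul D _ _ _ hx]
    rw [Function.iterate_succ_apply (⇑D) (s+1) y, Function.iterate_succ_apply (⇑D) s y]
    simp only [nsmul_eq_mul]
    push_cast
    ring

lemma D_inv (x : K) (hx : D x = 0) : D x⁻¹ = 0 := by
  rcases eq_or_ne x 0 with h | h
  · simp [h]
  · have h1 : D (x * x⁻¹) = 0 := by rw [mul_inv_cancel₀ h, D.map_one_eq_zero]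
    rw [D.leibniz, smul_eq_mul, smul_eq_mul, hx, mul_zero, add_zero] at h1
    exact (mul_eq_zero.mp h1).resolve_left h

end

section
variable {ℓ : ℕ} {K : Type*} [Field K] [Algebra ℂ K]

lemma Bmat_map (Binf : Fin ℓ → ℂ) (z : ℤ) :
    (Bmat Binf z : Matrix (Fin ℓ) (Fin ℓ) K)
      = (Bmat Binf z : Matrix (Fin ℓ) (Fin ℓ) ℂ).map (algebraMap ℂ K) := by
  ext i j
  simp only [Bmat, Matrix.map_apply, Matrix.neg_apply, Matrix.add_apply,
    Matrix.diagonal_apply, Matrix.smul_apply, Matrix.one_apply, smul_eq_mul]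
  rcases eq_or_ne i j with h | h <;> simp [h, map_intCast]

lemma Bmat_inv_map (Binf : Fin ℓ → ℂ) (z : ℤ)
    (hB : (Bmat Binf z : Matrix (Fin ℓ) (Fin ℓ) K).det ≠ 0) :
    (Bmat Binf z : Matrix (Fin ℓ) (Fin ℓ) K)⁻¹
      = ((Bmat Binf z : Matrix (Fin ℓ) (Fin ℓ) ℂ)⁻¹).map (algebraMap ℂ K) := by
  have hdC : (Bmat Binf z : Matrix (Fin ℓ) (Fin ℓ) ℂ).det ≠ 0 := by
    intro h
    apply hB
    rw [Bmat_map]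
    rw [show (Bmat Binf z : Matrix (Fin ℓ) (Fin ℓ) ℂ).map (algebraMap ℂ K) = (algebraMap ℂ K).mapMatrix (Bmat Binf z) from rfl, ← RingHom.map_det, h, map_zero]
  apply Matrix.inv_eq_right_inv
  rw [Bmat_map, ← Matrix.map_mul,
    Matrix.mul_nonsing_inv _ (isUnit_iff_ne_zero.mpr hdC)]
  ext i j
  simp [Matrix.map_apply, Matrix.one_apply, apply_ite]

lemma D_Bmat_inv (D : Derivation ℂ K K) (Binf : Fin ℓ → ℂ) (z : ℤ)
    (hB : (Bmat Binf z : Matrix (Fin ℓ) (Fin ℓ) K).det ≠ 0) (i j : Fin ℓ) :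
    D ((Bmat Binf z : Matrix (Fin ℓ) (Fin ℓ) K)⁻¹ i j) = 0 := by
  rw [Bmat_inv_map Binf z hB]
  simp [Matrix.map_apply, Derivation.map_algebraMap]

end

section
variable {ℓ : ℕ} {K : Type*} [Field K] [Algebra ℂ K]

lemma coe_list_int (n : ℕ) : ((List.range n : List ℕ) : List ℤ) = (List.range n).map (fun m : ℕ => (m : ℤ)) := by
  simp only [List.pure_def, List.bind_eq_flatMap]
  induction (List.range n) with
  | nil => rfl
  | cons a l ih => simp [List.flatMap_cons, ih]

noncomputable def Hlist (Binf : Fin ℓ → ℂ) (Mη : Matrix (Fin ℓ) (Fin ℓ) K) (k : ℤ) (n : ℕ) :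
    Matrix (Fin ℓ) (Fin ℓ) K :=
  ((List.range n).map (fun m : ℕ => (Bmat Binf (k + 1 + (m : ℤ)))⁻¹ * Mη)).prod

noncomputable def Clist (Binf : Fin ℓ → ℂ) (k : ℤ) (n : ℕ) : Matrix (Fin ℓ) (Fin ℓ) K :=
  ((List.range n).map (fun m : ℕ => ((Bmat Binf (k + 1 + (m : ℤ)) : Matrix (Fin ℓ) (Fin ℓ) K))⁻¹)).prod

lemma Hmat_eq_Hlist (Binf : Fin ℓ → ℂ) (Mη : Matrix (Fin ℓ) (Fin ℓ) K) (k e : ℤ) :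
    Hmat Binf Mη k e = Hlist Binf Mη k (e - k).toNat := by
  unfold Hmat Hlist
  rw [show (do let a ← List.range (e-k).toNat; pure ((a : ℕ) : ℤ))
      = (List.range (e-k).toNat).map (fun m : ℕ => (m:ℤ)) from coe_list_int _, List.map_map]
  rfl

lemma Hlist_zero (Binf : Fin ℓ → ℂ) (Mη : Matrix (Fin ℓ) (Fin ℓ) K) (k : ℤ) :
    Hlist Binf Mη k 0 = 1 := rfl

lemma Hlist_succ (Binf : Fin ℓ → ℂ) (Mη : Matrix (Fin ℓ) (Fin ℓ) K) (k : ℤ) (n : ℕ) :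
    Hlist Binf Mη k (n+1) = ((Bmat Binf (k+1))⁻¹ * Mη) * Hlist Binf Mη (k+1) n := by
  unfold Hlist
  rw [List.range_succ_eq_map, List.map_cons, List.prod_cons, List.map_map]
  congr 2
  · norm_num
  · refine List.map_congr_left fun m _ => ?_
    simp only [Function.comp]
    congr 3
    push_cast
    ring

lemma Clist_succ (Binf : Fin ℓ → ℂ) (k : ℤ) (n : ℕ) :
    (Clist Binf k (n+1) : Matrix (Fin ℓ) (Fin ℓ) K)
      = (Bmat Binf (k+1) : Matrix (Fin ℓ) (Fin ℓ) K)⁻¹ * Clist Binf (k+1) n := by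
  unfold Clist
  rw [List.range_succ_eq_map, List.map_cons, List.prod_cons, List.map_map]
  congr 2
  · norm_num
  · refine List.map_congr_left fun m _ => ?_
    simp only [Function.comp]
    congr 2
    push_cast
    ring

lemma Clist_det_ne (Binf : Fin ℓ → ℂ)
    (hBdet : ∀ j : ℤ, (Bmat Binf j : Matrix (Fin ℓ) (Fin ℓ) K).det ≠ 0)
    (n : ℕ) : ∀ k : ℤ, (Clist Binf k n : Matrix (Fin ℓ) (Fin ℓ) K).det ≠ 0 := by
  induction n with
  | zero => intro k; simp [Clist]
  | succ n ih =>
    intro k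
    rw [Clist_succ, Matrix.det_mul]
    refine mul_ne_zero ?_ (ih (k+1))
    rw [Matrix.det_nonsing_inv, Ring.inverse_eq_inv']
    exact inv_ne_zero (hBdet (k+1))

end


section
variable {ℓ : ℕ} {K : Type*} [Field K] [Algebra ℂ K]

lemma D_F_entry (D : Derivation ℂ K K) (Binf : Fin ℓ → ℂ)
    (Mη : Matrix (Fin ℓ) (Fin ℓ) K)
    (hBdet : ∀ j : ℤ, (Bmat Binf j : Matrix (Fin ℓ) (Fin ℓ) K).det ≠ 0)
    (hMη : ∀ i j, D (Mη i j) = if i = j then 1 else 0) (z : ℤ) (i m : Fin ℓ) :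
    D ((((Bmat Binf z : Matrix (Fin ℓ) (Fin ℓ) K))⁻¹ * Mη) i m)
      = (Bmat Binf z : Matrix (Fin ℓ) (Fin ℓ) K)⁻¹ i m := by
  rw [Matrix.mul_apply, map_sum]
  have : ∀ p, D ((Bmat Binf z : Matrix (Fin ℓ) (Fin ℓ) K)⁻¹ i p * Mη p m)
      = (Bmat Binf z : Matrix (Fin ℓ) (Fin ℓ) K)⁻¹ i p * (if p = m then 1 else 0) := by
    intro p
    rw [D.leibniz, smul_eq_mul, smul_eq_mul, hMη, D_Bmat_inv D Binf z (hBdet z), mul_zero,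
      add_zero]
  simp only [this, mul_ite, mul_one, mul_zero]
  simp

lemma key_iter (D : Derivation ℂ K K) (Binf : Fin ℓ → ℂ)
    (Mη : Matrix (Fin ℓ) (Fin ℓ) K)
    (hBdet : ∀ j : ℤ, (Bmat Binf j : Matrix (Fin ℓ) (Fin ℓ) K).det ≠ 0)
    (hMη : ∀ i j, D (Mη i j) = if i = j then 1 else 0) :
    ∀ n : ℕ, ∀ k : ℤ,
      (∀ s : ℕ, n < s → ∀ i j, (⇑D)^[s] (Hlist Binf Mη k n i j) = 0) ∧
      (∀ i j, (⇑D)^[n] (Hlist Binf Mη k n i j)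
        = (n.factorial : K) * Clist Binf k n i j) := by
  intro n
  induction n with
  | zero =>
    intro k
    constructor
    · intro s hs i j
      obtain ⟨s', rfl⟩ : ∃ s', s = s' + 1 := ⟨s - 1, by omega⟩
      rw [Function.iterate_succ_apply, Hlist_zero]
      have h1 : D ((1 : Matrix (Fin ℓ) (Fin ℓ) K) i j) = 0 := by
        rw [Matrix.one_apply]
        rcases eq_or_ne i j with h | h <;> simp [h, Derivation.map_one_eq_zero]
      rw [h1, iter_zero]
    · intro i j
      simp [Hlist_zero, Clist]
  | succ n ih =>
    intro k
    have hrec : ∀ i j, Hlist Binf Mη k (n+1) i j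
        = ∑ m, (((Bmat Binf (k+1) : Matrix (Fin ℓ) (Fin ℓ) K))⁻¹ * Mη) i m
            * Hlist Binf Mη (k+1) n m j := by
      intro i j
      rw [Hlist_succ, Matrix.mul_apply]
    have hF := D_F_entry D Binf Mη hBdet hMη (k+1)
    have hFF : ∀ i m, D (D ((((Bmat Binf (k+1) : Matrix (Fin ℓ) (Fin ℓ) K))⁻¹ * Mη) i m)) = 0 := by
      intro i m
      rw [hF i m]
      exact D_Bmat_inv D Binf (k+1) (hBdet (k+1)) i m
    constructor
    · intro s hs i j
      obtain ⟨s', rfl⟩ : ∃ s', s = s' + 1 := ⟨s - 1, by omega⟩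
      rw [hrec, iter_sum]
      apply Finset.sum_eq_zero
      intro m _
      rw [iter_mul D _ (hFF i m)]
      rw [(ih (k+1)).1 (s'+1) (by omega) m j, (ih (k+1)).1 s' (by omega) m j]
      simp
    · intro i j
      rw [hrec, iter_sum]
      have step : ∀ m, (⇑D)^[n+1]
          ((((Bmat Binf (k+1) : Matrix (Fin ℓ) (Fin ℓ) K))⁻¹ * Mη) i m
            * Hlist Binf Mη (k+1) n m j)
          = ((n+1 : ℕ) : K) * ((Bmat Binf (k+1) : Matrix (Fin ℓ) (Fin ℓ) K)⁻¹ i m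
              * ((n.factorial : K) * Clist Binf (k+1) n m j)) := by
        intro m
        rw [iter_mul D _ (hFF i m), (ih (k+1)).1 (n+1) (by omega) m j,
          (ih (k+1)).2 m j, hF i m]
        simp [nsmul_eq_mul]
      simp only [step]
      rw [Clist_succ, Matrix.mul_apply, Finset.mul_sum]
      apply Finset.sum_congr rfl
      intro m _
      push_cast [Nat.factorial_succ]
      ring

end


section
variable {ℓ : ℕ} {K : Type*} [Field K] [Algebra ℂ K]

lemma part1_aux (D : Derivation ℂ K K) (Binf : Fin ℓ → ℂ)
    (Mη : Matrix (Fin ℓ) (Fin ℓ) K)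
    (hBdet : ∀ j : ℤ, (Bmat Binf j : Matrix (Fin ℓ) (Fin ℓ) K).det ≠ 0)
    (hMη : ∀ i j, D (Mη i j) = if i = j then 1 else 0) :
    ∀ n : ℕ, ∀ d e : ℤ, d ≤ e → (e - d).toNat = n →
      ∀ a : ℤ → Fin ℓ → K, (∀ k i, D (a k i) = 0) →
      (∑ k ∈ Finset.Icc d e, Matrix.vecMul (a k) (Hmat Binf Mη k e)) = 0 →
      a e = 0 := by
  haveI : CharZero K := charZero_of_injective_algebraMap (algebraMap ℂ K).injective
  intro n
  induction n using Nat.strong_induction_on with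
  | _ n ih =>
  intro d e hde hn a ha hsum
  have key := key_iter D Binf Mη hBdet hMη
  have hsplit : Finset.Icc d e = insert d (Finset.Icc (d+1) e) := by
    ext x
    simp only [Finset.mem_Icc, Finset.mem_insert]
    omega
  have hd_not : d ∉ Finset.Icc (d+1) e := by
    simp only [Finset.mem_Icc]
    omega
  have h0 : ∀ j, ∑ k ∈ Finset.Icc d e, ∑ i, a k i * Hmat Binf Mη k e i j = 0 := by
    intro j
    have := congrFun hsum j
    simpa [Finset.sum_apply, Matrix.vecMul, dotProduct] using this
  have h1 : ∀ j, ∑ i, a d i * ((n.factorial : K) * Clist Binf d n i j) = 0 := by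
    intro j
    have h2 : (⇑D)^[n] (∑ k ∈ Finset.Icc d e, ∑ i, a k i * Hmat Binf Mη k e i j) = 0 := by
      rw [h0 j, iter_zero]
    rw [iter_sum] at h2
    have h3 : ∀ k ∈ Finset.Icc d e, (⇑D)^[n] (∑ i, a k i * Hmat Binf Mη k e i j)
        = ∑ i, a k i * (⇑D)^[n] (Hmat Binf Mη k e i j) := by
      intro k _
      rw [iter_sum]
      exact Finset.sum_congr rfl fun i _ => iter_const_mul D n _ _ (ha k i)
    rw [Finset.sum_congr rfl h3, hsplit, Finset.sum_insert hd_not] at h2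
    have h4 : ∑ k ∈ Finset.Icc (d+1) e, ∑ i, a k i * (⇑D)^[n] (Hmat Binf Mη k e i j) = 0 := by
      apply Finset.sum_eq_zero
      intro k hk
      apply Finset.sum_eq_zero
      intro i _
      have hk' : d + 1 ≤ k ∧ k ≤ e := by simpa [Finset.mem_Icc] using hk
      rw [Hmat_eq_Hlist, (key (e - k).toNat k).1 n (by omega) i j, mul_zero]
    rw [h4, add_zero] at h2
    have h5 : ∀ i, (⇑D)^[n] (Hmat Binf Mη d e i j) = (n.factorial : K) * Clist Binf d n i j := by
      intro i
      rw [Hmat_eq_Hlist, hn]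
      exact (key n d).2 i j
    rw [Finset.sum_congr rfl (fun i _ => by rw [h5 i])] at h2
    exact h2
  have hfac : (n.factorial : K) ≠ 0 := Nat.cast_ne_zero.mpr (Nat.factorial_ne_zero n)
  have had : Matrix.vecMul (a d) (Clist Binf d n) = 0 := by
    funext j
    have h6 : (n.factorial : K) * ∑ i, a d i * Clist Binf d n i j = 0 := by
      rw [Finset.mul_sum, ← h1 j]
      exact Finset.sum_congr rfl fun i _ => by ring
    have h7 : ∑ i, a d i * Clist Binf d n i j = 0 :=
      (mul_eq_zero.mp h6).resolve_left hfac
    simpa [Matrix.vecMul, dotProduct] using h7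
  have had0 : a d = 0 := by
    have hCdet := Clist_det_ne Binf hBdet n d
    have hmul := Matrix.mul_nonsing_inv (Clist Binf d n) (isUnit_iff_ne_zero.mpr hCdet)
    calc a d = Matrix.vecMul (a d) (Clist Binf d n * (Clist Binf d n)⁻¹) := by
          rw [hmul, Matrix.vecMul_one]
      _ = Matrix.vecMul (Matrix.vecMul (a d) (Clist Binf d n)) (Clist Binf d n)⁻¹ := by
          rw [Matrix.vecMul_vecMul]
      _ = 0 := by rw [had, Matrix.zero_vecMul]
  rcases eq_or_lt_of_le hde with heq | hlt
  · rw [← heq]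
    exact had0
  · refine ih (e - (d+1)).toNat (by omega) (d+1) e (by omega) rfl a ha ?_
    rw [hsplit, Finset.sum_insert hd_not, had0, Matrix.zero_vecMul, zero_add] at hsum
    exact hsum

end


section
variable {ℓ : ℕ} {K : Type*} [Field K] [Algebra ℂ K]

lemma expand_xi (Binf : Fin ℓ → ℂ) (Mη : Matrix (Fin ℓ) (Fin ℓ) K)
    (xi : ℤ → Fin ℓ → Derivation ℂ K K)
    (hrec : ∀ (k : ℤ) (i : Fin ℓ), xi k i =
      ∑ j, ((((Bmat Binf (k + 1) : Matrix (Fin ℓ) (Fin ℓ) K))⁻¹ * Mη) i j) • xi (k + 1) j) :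
    ∀ n : ℕ, ∀ k e : ℤ, k ≤ e → (e - k).toNat = n →
      ∀ i, xi k i = ∑ j, (Hmat Binf Mη k e i j) • xi e j := by
  intro n
  induction n with
  | zero =>
    intro k e hke hn i
    have h1 : Hmat Binf Mη k e = 1 := by
      rw [Hmat_eq_Hlist, show (e - k).toNat = 0 from by omega, Hlist_zero]
    have hek : e = k := by omega
    subst hek
    rw [h1]
    simp only [Matrix.one_apply, ite_smul, zero_smul]
    rw [Finset.sum_ite_eq]
    simp
  | succ n ih =>
    intro k e hke hn i
    have hke' : k + 1 ≤ e := by omega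
    have hH : Hmat Binf Mη k e
        = ((Bmat Binf (k+1) : Matrix (Fin ℓ) (Fin ℓ) K)⁻¹ * Mη) * Hmat Binf Mη (k+1) e := by
      rw [Hmat_eq_Hlist, Hmat_eq_Hlist, show (e - k).toNat = (e - (k+1)).toNat + 1 from by omega,
        Hlist_succ]
    rw [hrec k i]
    have hstep : ∀ j, xi (k+1) j = ∑ m, (Hmat Binf Mη (k+1) e j m) • xi e m :=
      fun j => ih (k+1) e hke' (by omega) j
    calc ∑ j, ((((Bmat Binf (k + 1) : Matrix (Fin ℓ) (Fin ℓ) K))⁻¹ * Mη) i j) • xi (k + 1) j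
        = ∑ j, ∑ m, ((((Bmat Binf (k + 1) : Matrix (Fin ℓ) (Fin ℓ) K))⁻¹ * Mη) i j
            * Hmat Binf Mη (k+1) e j m) • xi e m := by
          apply Finset.sum_congr rfl
          intro j _
          rw [hstep j, Finset.smul_sum]
          exact Finset.sum_congr rfl fun m _ => by rw [smul_smul]
      _ = ∑ m, (∑ j, (((Bmat Binf (k + 1) : Matrix (Fin ℓ) (Fin ℓ) K))⁻¹ * Mη) i j
            * Hmat Binf Mη (k+1) e j m) • xi e m := by
          rw [Finset.sum_comm]
          exact Finset.sum_congr rfl fun m _ => by rw [Finset.sum_smul]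
      _ = ∑ m, (Hmat Binf Mη k e i m) • xi e m := by
          apply Finset.sum_congr rfl
          intro m _
          rw [hH, Matrix.mul_apply]

lemma part2_aux (D : Derivation ℂ K K) (Binf : Fin ℓ → ℂ)
    (Mη : Matrix (Fin ℓ) (Fin ℓ) K)
    (hBdet : ∀ j : ℤ, (Bmat Binf j : Matrix (Fin ℓ) (Fin ℓ) K).det ≠ 0)
    (hMη : ∀ i j, D (Mη i j) = if i = j then 1 else 0)
    (xi : ℤ → Fin ℓ → Derivation ℂ K K)
    (hrec : ∀ (k : ℤ) (i : Fin ℓ), xi k i =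
      ∑ j, ((((Bmat Binf (k + 1) : Matrix (Fin ℓ) (Fin ℓ) K))⁻¹ * Mη) i j) • xi (k + 1) j)
    (hindep : ∀ (k : ℤ) (c : Fin ℓ → K), ∑ i, c i • xi k i = 0 → c = 0) :
    ∀ n : ℕ, ∀ d e : ℤ, d ≤ e → (e - d).toNat = n →
      ∀ a : ℤ → Fin ℓ → K, (∀ k i, D (a k i) = 0) →
      (∑ k ∈ Finset.Icc d e, ∑ i, a k i • xi k i) = 0 →
      ∀ k ∈ Finset.Icc d e, ∀ i, a k i = 0 := by
  intro n
  induction n using Nat.strong_induction_on with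
  | _ n ih =>
  intro d e hde hn a ha hsum
  have hexp : ∑ k ∈ Finset.Icc d e, ∑ i, a k i • xi k i
      = ∑ j, (∑ k ∈ Finset.Icc d e, ∑ i, a k i * Hmat Binf Mη k e i j) • xi e j := by
    calc ∑ k ∈ Finset.Icc d e, ∑ i, a k i • xi k i
        = ∑ k ∈ Finset.Icc d e, ∑ i, ∑ j, (a k i * Hmat Binf Mη k e i j) • xi e j := by
          apply Finset.sum_congr rfl
          intro k hk
          apply Finset.sum_congr rfl
          intro i _
          have hke : k ≤ e := (Finset.mem_Icc.mp hk).2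
          rw [expand_xi Binf Mη xi hrec (e - k).toNat k e hke rfl i, Finset.smul_sum]
          exact Finset.sum_congr rfl fun j _ => by rw [smul_smul]
      _ = ∑ k ∈ Finset.Icc d e, ∑ j, ∑ i, (a k i * Hmat Binf Mη k e i j) • xi e j := by
          exact Finset.sum_congr rfl fun k _ => Finset.sum_comm
      _ = ∑ j, ∑ k ∈ Finset.Icc d e, ∑ i, (a k i * Hmat Binf Mη k e i j) • xi e j :=
          Finset.sum_comm
      _ = ∑ j, (∑ k ∈ Finset.Icc d e, ∑ i, a k i * Hmat Binf Mη k e i j) • xi e j := by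
          apply Finset.sum_congr rfl
          intro j _
          rw [Finset.sum_smul]
          exact Finset.sum_congr rfl fun k _ => by rw [Finset.sum_smul]
  have hc0 : (fun j => ∑ k ∈ Finset.Icc d e, ∑ i, a k i * Hmat Binf Mη k e i j)
      = (0 : Fin ℓ → K) :=
    hindep e _ (by rw [← hexp]; exact hsum)
  have hae : a e = 0 := by
    refine part1_aux D Binf Mη hBdet hMη (e - d).toNat d e hde rfl a ha ?_
    funext j
    have := congrFun hc0 j
    simpa [Finset.sum_apply, Matrix.vecMul, dotProduct] using this
  intro k hk i
  rcases eq_or_ne k e with rfl | hne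
  · exact congrFun hae i
  · have hk' : d ≤ k ∧ k ≤ e := Finset.mem_Icc.mp hk
    have hlt : d < e := by omega
    have hsplit : Finset.Icc d e = insert e (Finset.Icc d (e-1)) := by
      ext x
      simp only [Finset.mem_Icc, Finset.mem_insert]
      omega
    have he_not : e ∉ Finset.Icc d (e-1) := by
      simp only [Finset.mem_Icc]
      omega
    rw [hsplit, Finset.sum_insert he_not] at hsum
    have hze : ∑ i, a e i • xi e i = 0 := by
      rw [hae]
      simp
    rw [hze, zero_add] at hsum
    exact ih (e - 1 - d).toNat (by omega) d (e-1) (by omega) rfl a ha hsum k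
      (Finset.mem_Icc.mpr (by omega)) i

end

/-- With `M_η = t_ℓ·Id + M'(t')`, `D = ∂_{t_ℓ}` (so `D(M_η) = Id` and `D` kills `T`):
(1) if row vectors `a_k` with entries in `T` satisfy `Σ_{k=d}^e a_k ℋ_k = 0`, then `a_e = 0`;
(2) consequently the derivations `ξ_i^{(k)} = ∇_D^k(η_i)` are linearly independent over `T`. -/
theorem Hmat_relation_and_T_independence {ℓ : ℕ} {K : Type*} [Field K] [Algebra ℂ K]
    (Dder : Derivation ℂ K K) (nabD : Derivation ℂ K K → Derivation ℂ K K)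
    (hadd : ∀ φ ψ, nabD (φ + ψ) = nabD φ + nabD ψ)
    (hLeib : ∀ (p : K) φ, nabD (p • φ) = Dder p • φ + p • nabD φ)
    (Tsub : Subalgebra ℂ K) (hT : ∀ x ∈ Tsub, Dder x = 0)
    (tl : K) (hDtl : Dder tl = 1)
    (Mη : Matrix (Fin ℓ) (Fin ℓ) K) (hdet : Mη.det ≠ 0)
    (hM' : ∀ i j, Mη i j - (if i = j then tl else 0) ∈ Tsub)
    (Binf : Fin ℓ → ℂ) (hBdet : ∀ j : ℤ, (Bmat Binf j : Matrix (Fin ℓ) (Fin ℓ) K).det ≠ 0) :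
    (∀ d e : ℤ, d ≤ e → ∀ a : ℤ → Fin ℓ → K, (∀ k i, a k i ∈ Tsub) →
      (∑ k ∈ Finset.Icc d e, Matrix.vecMul (a k) (Hmat Binf Mη k e)) = 0 →
      a e = 0) ∧
    (∀ xi : ℤ → Fin ℓ → Derivation ℂ K K,
      (∀ (k : ℤ) (i : Fin ℓ), nabD (xi k i) = xi (k + 1) i) →
      (∀ (k : ℤ) (i : Fin ℓ), xi k i =
        ∑ j, ((((Bmat Binf (k + 1) : Matrix (Fin ℓ) (Fin ℓ) K))⁻¹ * Mη) i j) • xi (k + 1) j) →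
      (∀ (k : ℤ) (c : Fin ℓ → K), ∑ i, c i • xi k i = 0 → c = 0) →
      ∀ d e : ℤ, d ≤ e → ∀ a : ℤ → Fin ℓ → K, (∀ k i, a k i ∈ Tsub) →
        (∑ k ∈ Finset.Icc d e, ∑ i, a k i • xi k i) = 0 →
        ∀ k ∈ Finset.Icc d e, ∀ i, a k i = 0) := by
  have hMη : ∀ i j, Dder (Mη i j) = if i = j then (1:K) else 0 := by
    intro i j
    have h := hT _ (hM' i j)
    have heq : Mη i j = (Mη i j - (if i = j then tl else 0)) + (if i = j then tl else 0) := by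
      ring
    rw [heq, map_add, h, zero_add]
    rcases eq_or_ne i j with h' | h' <;> simp [h', hDtl]
  constructor
  · intro d e hde a haT hsum
    exact part1_aux Dder Binf Mη hBdet hMη (e - d).toNat d e hde rfl a
      (fun k i => hT _ (haT k i)) hsum
  · intro xi _ hrec hindep d e hde a haT hsum
    exact part2_aux Dder Binf Mη hBdet hMη xi hrec hindep (e - d).toNat d e hde rfl a
      (fun k i => hT _ (haT k i)) hsum
end
end
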